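/- Let V be a finite set with a strict partial order ≺ partitioned into three relations ⊑ (includes), ≬ (overlaps), ∥ (parallel) satisfying: (A1) x ⊑ y and y ⊑ z imply x ⊑ z; (A2) x ⊑ y and y ≬ z imply x ⊑ z or x ≬ z; (A3) x ≬ y and y ⊑ z imply x ≬ z or x ∥ z; (A4) x ∥ y and y ≺ z imply x ∥ z. Then there exists a tree T and a family of subtrees (S_x)_{x ∈ V} of T such that for all x ≺ y: S_y ⊊ S_x iff x ⊑ y; S_x and S_y overlap (intersect, neither contained in the other) iff x ≬ y; and S_x ∩ S_y = ∅ iff x ∥ y. Moreover the resulting subtree family is a clean overlap model (no two overlapping subtrees both contain a third one). -/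

import Mathlib

/-- Two sets *overlap* if they intersect but neither contains the other. -/
def SetsOverlap {α : Type*} (s t : Set α) : Prop :=
  (s ∩ t).Nonempty ∧ ¬ s ⊆ t ∧ ¬ t ⊆ s

open SimpleGraph

section TreeAux

variable {T : Type*}

lemma parentGraph_isTree [Fintype T] (p : T → T) (r : T) (d : T → ℕ)
    (hr : p r = r) (hd : ∀ a, a ≠ r → d (p a) < d a) :
    (SimpleGraph.fromRel fun a b => p a = b).IsTree := by
  classical
  set G := SimpleGraph.fromRel fun a b => p a = b with hG
  have hadj : ∀ a, a ≠ r → G.Adj a (p a) := by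
    intro a ha
    refine ⟨fun h => ?_, Or.inl rfl⟩
    have := hd a ha; rw [← h] at this; exact lt_irrefl _ this
  have hnb : ∀ a b : T, G.Adj a b → d b ≤ d a → b = p a := by
    intro a b hab hle
    rcases hab.2 with h | h
    · exact h.symm
    · exfalso
      have hbr : b ≠ r := by
        rintro rfl; rw [hr] at h; exact hab.1 h.symm
      have := hd b hbr
      rw [h] at this
      omega
  constructor
  · -- connected
    have key : ∀ n a, d a = n → G.Reachable a r := by
      intro n
      induction n using Nat.strong_induction_on with
      | _ n ih =>
        intro a hn
        by_cases ha : a = r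
        · subst ha; exact Reachable.refl a
        · exact (hadj a ha).reachable.trans (ih (d (p a)) (hn ▸ hd a ha) _ rfl)
    rw [connected_iff]
    exact ⟨fun a b => (key _ a rfl).trans (key _ b rfl).symm, ⟨r⟩⟩
  · -- acyclic
    intro v c hc
    obtain ⟨a, ha, hamax⟩ := Finset.exists_max_image c.support.toFinset d
      ⟨v, List.mem_toFinset.2 c.start_mem_support⟩
    have hamax' : ∀ u ∈ c.support, d u ≤ d a := fun u hu => hamax u (List.mem_toFinset.2 hu)
    have ha' : a ∈ c.support := List.mem_toFinset.1 ha
    set c' := c.rotate a ha' with hc'def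
    have hc' : c'.IsCycle := hc.rotate ha'
    have hsupp : ∀ u ∈ c'.support, d u ≤ d a := by
      intro u hu
      rw [c'.support_eq_cons] at hu
      rcases List.mem_cons.1 hu with rfl | hu
      · exact le_refl _
      · exact hamax' u (List.mem_of_mem_tail ((c.support_rotate a ha').mem_iff.1 hu))
    clear_value c'
    cases c' with
    | nil => exact hc'.not_of_nil
    | @cons _ b _ h q =>
      have hb : b = p a := hnb a b h (hsupp b (by
        rw [Walk.support_cons]; exact List.mem_cons_of_mem _ q.start_mem_support))
      have hne : a ≠ b := h.ne
      obtain ⟨y, hy, q', hq'⟩ := Walk.exists_eq_cons_of_ne hne q.reverse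
      have hy' : y = p a := by
        refine hnb a y hy (hsupp y ?_)
        rw [Walk.support_cons]
        have : y ∈ q.reverse.support := by
          rw [hq', Walk.support_cons]; exact List.mem_cons_of_mem _ q'.start_mem_support
        rw [Walk.support_reverse, List.mem_reverse] at this
        exact List.mem_cons_of_mem _ this
      have hmem : s(a, y) ∈ q.edges := by
        have : s(a, y) ∈ q.reverse.edges := by
          rw [hq', Walk.edges_cons]; exact List.mem_cons_self
        rwa [Walk.edges_reverse, List.mem_reverse] at this
      have hnodup := hc'.isCircuit.isTrail.edges_nodup
      rw [Walk.edges_cons, List.nodup_cons] at hnodup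
      exact hnodup.1 (hy'.trans hb.symm ▸ hmem)

lemma parentGraph_induce_connected (p : T → T) (r : T) (d : T → ℕ)
    (hd : ∀ a, a ≠ r → d (p a) < d a) (s : Set T) (r' : T) (hr' : r' ∈ s)
    (hcl : ∀ a ∈ s, a ≠ r' → p a ∈ s ∧ a ≠ r) :
    ((SimpleGraph.fromRel fun a b => p a = b).induce s).Connected := by
  rw [connected_iff]
  refine ⟨?_, ⟨⟨r', hr'⟩⟩⟩
  have key : ∀ n (a : s), d a.1 = n →
      ((SimpleGraph.fromRel fun a b => p a = b).induce s).Reachable a ⟨r', hr'⟩ := by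
    intro n
    induction n using Nat.strong_induction_on with
    | _ n ih =>
      intro a hn
      by_cases ha : a.1 = r'
      · have : a = ⟨r', hr'⟩ := Subtype.ext ha
        subst this; exact Reachable.refl _
      · obtain ⟨hps, har⟩ := hcl a.1 a.2 ha
        have hlt := hd a.1 har
        have hadj : ((SimpleGraph.fromRel fun a b => p a = b).induce s).Adj a ⟨p a.1, hps⟩ := by
          refine ⟨fun hcon => ?_, Or.inl rfl⟩
          have heq : (a : T) = p a.1 := hcon
          rw [← heq] at hlt; exact lt_irrefl _ hlt
        exact hadj.reachable.trans (ih (d (p a.1)) (hn ▸ hlt) _ rfl)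
  intro u v
  exact (key _ u rfl).trans (key _ v rfl).symm

end TreeAux

section Aux

variable {V : Type*}

open Classical in
/-- The parent map of the auxiliary tree on `Option (V ⊕ V)`. -/
noncomputable def auxP (prec : V → V → Prop) : Option (V ⊕ V) → Option (V ⊕ V)
  | none => none
  | some (Sum.inr x) => some (Sum.inl x)
  | some (Sum.inl x) =>
      if h : ∃ m, prec m x ∧ ∀ a, prec a x → a = m ∨ prec a m then some (Sum.inl h.choose)
      else none

/-- Depth function on the auxiliary tree. -/
noncomputable def auxD (prec : V → V → Prop) : Option (V ⊕ V) → ℕ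
  | none => 0
  | some (Sum.inl x) => {a | prec a x}.ncard + 1
  | some (Sum.inr x) => {a | prec a x}.ncard + 2

/-- The subtree assigned to `x`. -/
def auxS (inc ov : V → V → Prop) : V → Set (Option (V ⊕ V)) := fun x t =>
  match t with
  | none => False
  | some (Sum.inl w) => w = x ∨ inc x w ∨ ov x w
  | some (Sum.inr w) => w = x ∨ inc x w

lemma mem_auxS_inl {inc ov : V → V → Prop} {x w : V} :
    some (Sum.inl w) ∈ auxS inc ov x ↔ (w = x ∨ inc x w ∨ ov x w) := Iff.rfl

lemma mem_auxS_inr {inc ov : V → V → Prop} {x w : V} :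
    some (Sum.inr w) ∈ auxS inc ov x ↔ (w = x ∨ inc x w) := Iff.rfl

lemma not_mem_auxS_none {inc ov : V → V → Prop} {x : V} :
    none ∉ auxS inc ov x := id

end Aux

theorem realize_aux {V : Type} [Fintype V]
    (prec inc ov par : V → V → Prop)
    (hirr : ∀ v, ¬ prec v v)
    (htrans : ∀ u v w, prec u v → prec v w → prec u w)
    (hforest : ∀ a b v, prec a v → prec b v → a = b ∨ prec a b ∨ prec b a)
    (hpart : ∀ x y, prec x y ↔ (inc x y ∨ ov x y ∨ par x y))
    (hdisj₁ : ∀ x y, inc x y → ¬ ov x y) (hdisj₂ : ∀ x y, inc x y → ¬ par x y)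
    (hdisj₃ : ∀ x y, ov x y → ¬ par x y)
    (hA1 : ∀ x y z, inc x y → inc y z → inc x z)
    (hA2 : ∀ x y z, inc x y → ov y z → inc x z ∨ ov x z)
    (hA3 : ∀ x y z, ov x y → inc y z → ov x z ∨ par x z)
    (hA4 : ∀ x y z, par x y → prec y z → par x z) :
    ∃ (T : Type) (tr : SimpleGraph T), tr.IsTree ∧
      ∃ S : V → Set T,
        (∀ x, (S x).Nonempty ∧ (tr.induce (S x)).Connected) ∧
        (∀ x y, prec x y →
          ((inc x y ↔ S y ⊂ S x) ∧
           (ov x y ↔ SetsOverlap (S x) (S y)) ∧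
           (par x y ↔ S x ∩ S y = ∅))) ∧
        (¬ ∃ x y z, SetsOverlap (S x) (S y) ∧ S z ⊆ S x ∩ S y) := by
  classical
  -- basic consequences
  have hnotboth : ∀ x y, prec x y → ¬ prec y x := fun x y hxy hyx => hirr x (htrans x y x hxy hyx)
  have hpinc : ∀ x y, inc x y → prec x y := fun x y h => (hpart x y).2 (Or.inl h)
  have hpov : ∀ x y, ov x y → prec x y := fun x y h => (hpart x y).2 (Or.inr (Or.inl h))
  have hppar : ∀ x y, par x y → prec x y := fun x y h => (hpart x y).2 (Or.inr (Or.inr h))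
  -- existence of maximal ancestors
  have hwf : WellFounded (fun a b : V => prec b a) := by
    have h1 : IsTrans V (fun a b : V => prec b a) := ⟨fun a b c h1 h2 => htrans c b a h2 h1⟩
    have h2 : IsIrrefl V (fun a b : V => prec b a) := ⟨fun a => hirr a⟩
    exact Finite.wellFounded_of_trans_of_irrefl _
  have hmax : ∀ x : V, (∃ a, prec a x) →
      ∃ m, prec m x ∧ ∀ a, prec a x → a = m ∨ prec a m := by
    intro x hx
    obtain ⟨m, hm, hmin⟩ := hwf.has_min {a | prec a x} hx
    refine ⟨m, hm, fun a ha => ?_⟩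
    rcases hforest a m x ha hm with h | h | h
    · exact Or.inl h
    · exact Or.inr h
    · exact absurd h (hmin a ha)
  set p := auxP prec with hp
  set d := auxD prec with hdd
  set S := auxS inc ov with hS
  -- depth decreases along the parent map
  have hd : ∀ a, a ≠ (none : Option (V ⊕ V)) → d (p a) < d a := by
    intro a ha
    match a with
    | none => exact absurd rfl ha
    | some (Sum.inr x) =>
        show d (some (Sum.inl x)) < _
        simp only [hdd, auxD]
        omega
    | some (Sum.inl x) =>
        by_cases hcond : ∃ m, prec m x ∧ ∀ a, prec a x → a = m ∨ prec a m
        · have hpa : p (some (Sum.inl x)) = some (Sum.inl hcond.choose) := by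
            simp only [hp, auxP]; rw [dif_pos hcond]
          rw [hpa]
          simp only [hdd, auxD]
          have hss : {a | prec a hcond.choose} ⊂ {a | prec a x} := by
            constructor
            · exact fun a ham => htrans a hcond.choose x ham hcond.choose_spec.1
            · intro hcon
              exact hirr hcond.choose (hcon hcond.choose_spec.1)
          have := Set.ncard_lt_ncard hss (Set.toFinite _)
          omega
        · have hpa : p (some (Sum.inl x)) = none := by
            simp only [hp, auxP]; rw [dif_neg hcond]
          rw [hpa]
          simp only [hdd, auxD]
          omega
  -- membership facts
  have hux : ∀ x, some (Sum.inl x) ∈ S x := fun x => Or.inl rfl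
  have hvx : ∀ x, some (Sum.inr x) ∈ S x := fun x => Or.inl rfl
  have hmemprec₁ : ∀ x w, some (Sum.inl w) ∈ S x → w = x ∨ prec x w := by
    intro x w h
    rcases h with h | h | h
    · exact Or.inl h
    · exact Or.inr (hpinc _ _ h)
    · exact Or.inr (hpov _ _ h)
  have hmemprec₂ : ∀ x w, some (Sum.inr w) ∈ S x → w = x ∨ prec x w := by
    intro x w h
    rcases h with h | h
    · exact Or.inl h
    · exact Or.inr (hpinc _ _ h)
  have hnux : ∀ x y, prec x y → some (Sum.inl x) ∉ S y := by
    intro x y hxy h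
    rcases hmemprec₁ y x h with rfl | h
    · exact hirr x hxy
    · exact hnotboth x y hxy h
  -- forward implications
  have hsub : ∀ x y, inc x y → S y ⊆ S x := by
    intro x y hxy t ht
    match t with
    | none => exact absurd ht not_mem_auxS_none
    | some (Sum.inl w) =>
        rcases ht with rfl | h | h
        · exact Or.inr (Or.inl hxy)
        · exact Or.inr (Or.inl (hA1 x y w hxy h))
        · rcases hA2 x y w hxy h with h' | h'
          · exact Or.inr (Or.inl h')
          · exact Or.inr (Or.inr h')
    | some (Sum.inr w) =>
        rcases ht with rfl | h
        · exact Or.inr hxy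
        · exact Or.inr (hA1 x y w hxy h)
  have hssub : ∀ x y, inc x y → S y ⊂ S x := by
    intro x y hxy
    rw [Set.ssubset_def]
    exact ⟨hsub x y hxy, fun hcon => hnux x y (hpinc x y hxy) (hcon (hux x))⟩
  have hovS : ∀ x y, ov x y → SetsOverlap (S x) (S y) := by
    intro x y hxy
    refine ⟨⟨some (Sum.inl y), Or.inr (Or.inr hxy), hux y⟩, ?_, ?_⟩
    · exact fun hcon => hnux x y (hpov x y hxy) (hcon (hux x))
    · intro hcon
      rcases (hcon (hvx y) : _ ∨ _) with h' | h'
      · exact hirr x (h' ▸ hpov x y hxy)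
      · exact hdisj₁ x y h' hxy
  have hparS : ∀ x y, par x y → S x ∩ S y = ∅ := by
    intro x y hxy
    rw [Set.eq_empty_iff_forall_notMem]
    rintro t ⟨h1, h2⟩
    match t with
    | none => exact not_mem_auxS_none h1
    | some (Sum.inl w) =>
        rcases hmemprec₁ y w h2 with heq | hyw
        · rcases h1 with h | h | h
          · have hyx : y = x := heq ▸ h
            exact hirr x (hyx ▸ hppar x y hxy)
          · exact hdisj₂ x w h (heq.symm ▸ hxy)
          · exact hdisj₃ x w h (heq.symm ▸ hxy)
        · have hxw : par x w := hA4 x y w hxy hyw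
          rcases h1 with heq2 | h | h
          · exact hnotboth x y (hppar x y hxy) (heq2 ▸ hyw)
          · exact hdisj₂ x w h hxw
          · exact hdisj₃ x w h hxw
    | some (Sum.inr w) =>
        rcases hmemprec₂ y w h2 with heq | hyw
        · rcases h1 with h | h
          · have hyx : y = x := heq ▸ h
            exact hirr x (hyx ▸ hppar x y hxy)
          · exact hdisj₂ x w h (heq.symm ▸ hxy)
        · have hxw : par x w := hA4 x y w hxy hyw
          rcases h1 with heq2 | h
          · exact hnotboth x y (hppar x y hxy) (heq2 ▸ hyw)
          · exact hdisj₂ x w h hxw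
  -- cleanness helper
  have hclean : ∀ x y z, prec x y → SetsOverlap (S x) (S y) → S z ⊆ S x ∩ S y → False := by
    intro x y z hxy hovl hsubz
    have hovxy : ov x y := by
      rcases (hpart x y).1 hxy with h | h | h
      · exact absurd (hssub x y h).subset hovl.2.2
      · exact h
      · have hne := hovl.1
        rw [hparS x y h] at hne
        exact absurd hne Set.not_nonempty_empty
    obtain ⟨h1, h2⟩ := hsubz (hvx z)
    rcases hmemprec₂ y z h2 with heq | hyz
    · rcases h1 with h | h
      · have hyx : y = x := heq ▸ h
        exact hirr x (hyx ▸ hpov x y hovxy)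
      · exact hdisj₁ x z h (heq.symm ▸ hovxy)
    · have hincyz : inc y z := by
        rcases (h2 : _ ∨ _) with heq | h
        · exact absurd (heq ▸ hyz) (hirr y)
        · exact h
      rcases (h1 : _ ∨ _) with heq | h
      · exact hnotboth x y (hpov x y hovxy) (heq ▸ hyz)
      · rcases hA3 x y z hovxy hincyz with h' | h'
        · exact hdisj₁ x z h h'
        · exact hdisj₂ x z h h'
  -- comparability from intersection
  have hcomp : ∀ x y, (S x ∩ S y).Nonempty → x = y ∨ prec x y ∨ prec y x := by
    rintro x y ⟨t, h1, h2⟩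
    match t with
    | none => exact absurd h1 not_mem_auxS_none
    | some (Sum.inl w) =>
        rcases hmemprec₁ x w h1 with heq1 | hxw
        · rcases hmemprec₁ y w h2 with heq2 | hyw
          · exact Or.inl (heq1 ▸ heq2)
          · exact Or.inr (Or.inr (heq1 ▸ hyw))
        · rcases hmemprec₁ y w h2 with heq2 | hyw
          · exact Or.inr (Or.inl (heq2 ▸ hxw))
          · exact hforest x y w hxw hyw
    | some (Sum.inr w) =>
        rcases hmemprec₂ x w h1 with heq1 | hxw
        · rcases hmemprec₂ y w h2 with heq2 | hyw
          · exact Or.inl (heq1 ▸ heq2)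
          · exact Or.inr (Or.inr (heq1 ▸ hyw))
        · rcases hmemprec₂ y w h2 with heq2 | hyw
          · exact Or.inr (Or.inl (heq2 ▸ hxw))
          · exact hforest x y w hxw hyw
  refine ⟨Option (V ⊕ V), SimpleGraph.fromRel fun a b => p a = b,
    parentGraph_isTree p none d rfl hd, S, ?_, ?_, ?_⟩
  · -- nonempty and connected
    intro x
    refine ⟨⟨some (Sum.inl x), hux x⟩, ?_⟩
    apply parentGraph_induce_connected p none d hd (S x) (some (Sum.inl x)) (hux x)
    intro a ha hne
    refine ⟨?_, ?_⟩
    · match a with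
      | none => exact absurd ha not_mem_auxS_none
      | some (Sum.inr w) =>
          show some (Sum.inl w) ∈ S x
          rcases (ha : _ ∨ _) with heq | h
          · rw [heq]; exact hux x
          · exact Or.inr (Or.inl h)
      | some (Sum.inl w) =>
          have hwx : w ≠ x := fun hcon => hne (by rw [hcon])
          have hxw : prec x w := by
            rcases hmemprec₁ x w ha with heq | h
            · exact absurd heq hwx
            · exact h
          have hcond : ∃ m, prec m w ∧ ∀ a, prec a w → a = m ∨ prec a m := hmax w ⟨x, hxw⟩
          have hpa : p (some (Sum.inl w)) = some (Sum.inl hcond.choose) := by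
            simp only [hp, auxP]; rw [dif_pos hcond]
          rw [hpa]
          obtain ⟨hmw, hmmax⟩ := hcond.choose_spec
          rcases hmmax x hxw with h | h
          · rw [← h]; exact hux x
          · have hnpar : ¬ par x hcond.choose := by
              intro hcon
              have := hA4 x hcond.choose w hcon hmw
              rcases (ha : _ ∨ _) with heq | h' | h'
              · exact absurd heq hwx
              · exact hdisj₂ x w h' this
              · exact hdisj₃ x w h' this
            rcases (hpart x hcond.choose).1 h with h' | h' | h'
            · exact Or.inr (Or.inl h')
            · exact Or.inr (Or.inr h')
            · exact absurd h' hnpar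
    · match a with
      | none => exact absurd ha not_mem_auxS_none
      | some _ => exact Option.some_ne_none _
  · -- the three iffs
    intro x y hxy
    rcases (hpart x y).1 hxy with h | h | h
    · refine ⟨⟨fun _ => hssub x y h, fun _ => h⟩,
        ⟨fun ho => (hdisj₁ x y h ho).elim, fun hB => (hB.2.2 (hsub x y h)).elim⟩,
        ⟨fun hpp => (hdisj₂ x y h hpp).elim, fun hC => ?_⟩⟩
      have : some (Sum.inl y) ∈ S x ∩ S y := ⟨hsub x y h (hux y), hux y⟩
      rw [hC] at this
      exact this.elim
    · have hB := hovS x y h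
      refine ⟨⟨fun hi => (hdisj₁ x y hi h).elim, fun hA => (hB.2.2 hA.subset).elim⟩,
        ⟨fun _ => hB, fun _ => h⟩,
        ⟨fun hpp => (hdisj₃ x y h hpp).elim, fun hC => ?_⟩⟩
      have hne := hB.1
      rw [hC] at hne
      exact absurd hne Set.not_nonempty_empty
    · have hC := hparS x y h
      refine ⟨⟨fun hi => (hdisj₂ x y hi h).elim, fun hA => ?_⟩,
        ⟨fun ho => (hdisj₃ x y ho h).elim, fun hB => ?_⟩,
        ⟨fun _ => hC, fun _ => h⟩⟩
      · have : some (Sum.inl y) ∈ S x ∩ S y := ⟨hA.subset (hux y), hux y⟩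
        rw [hC] at this
        exact this.elim
      · have hne := hB.1
        rw [hC] at hne
        exact absurd hne Set.not_nonempty_empty
  · -- cleanness
    rintro ⟨x, y, z, hovl, hsubz⟩
    rcases hcomp x y hovl.1 with rfl | h | h
    · exact hovl.2.1 (le_refl _)
    · exact hclean x y z h hovl hsubz
    · refine hclean y x z h ⟨?_, hovl.2.2, hovl.2.1⟩ ?_
      · rw [Set.inter_comm]; exact hovl.1
      · exact fun t ht => ⟨(hsubz ht).2, (hsubz ht).1⟩

/-- **Realizing the abstract relations by subtrees of a tree (Lemma `subtree-game`,
constructive direction).**  Let `V` be a finite set equipped with the strict ancestor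
order `prec` of a rooted forest (irreflexive, transitive, ancestors of any vertex totally
ordered), partitioned into three pairwise disjoint relations `inc` (⊑), `ov` (≬), `par`
(∥) satisfying axioms (A1)–(A4).  Then there is a tree `T` and a family `(S x)` of
subtrees of `T` (nonempty sets inducing connected subgraphs) such that for all `x ≺ y`:
`S y ⊊ S x` iff `x ⊑ y`; `S x` and `S y` overlap iff `x ≬ y`; and `S x ∩ S y = ∅` iff
`x ∥ y`.  Moreover the family is a clean overlap model: no two overlapping subtrees both
contain a third one. -/
theorem abstract_relations_realized_by_subtrees {V : Type*} [Fintype V]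
    (prec inc ov par : V → V → Prop)
    (hirr : ∀ v, ¬ prec v v)
    (htrans : ∀ u v w, prec u v → prec v w → prec u w)
    (hforest : ∀ a b v, prec a v → prec b v → a = b ∨ prec a b ∨ prec b a)
    (hpart : ∀ x y, prec x y ↔ (inc x y ∨ ov x y ∨ par x y))
    (hdisj₁ : ∀ x y, inc x y → ¬ ov x y) (hdisj₂ : ∀ x y, inc x y → ¬ par x y)
    (hdisj₃ : ∀ x y, ov x y → ¬ par x y)
    (hA1 : ∀ x y z, inc x y → inc y z → inc x z)
    (hA2 : ∀ x y z, inc x y → ov y z → inc x z ∨ ov x z)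
    (hA3 : ∀ x y z, ov x y → inc y z → ov x z ∨ par x z)
    (hA4 : ∀ x y z, par x y → prec y z → par x z) :
    ∃ (T : Type) (tr : SimpleGraph T), tr.IsTree ∧
      ∃ S : V → Set T,
        (∀ x, (S x).Nonempty ∧ (tr.induce (S x)).Connected) ∧
        (∀ x y, prec x y →
          ((inc x y ↔ S y ⊂ S x) ∧
           (ov x y ↔ SetsOverlap (S x) (S y)) ∧
           (par x y ↔ S x ∩ S y = ∅))) ∧
        (¬ ∃ x y z, SetsOverlap (S x) (S y) ∧ S z ⊆ S x ∩ S y) := by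
  classical
  obtain ⟨e⟩ : Nonempty (V ≃ Fin (Fintype.card V)) := ⟨Fintype.equivFin V⟩
  obtain ⟨T, tr, htree, S', hS1, hS2, hS3⟩ :=
    realize_aux (fun a b => prec (e.symm a) (e.symm b)) (fun a b => inc (e.symm a) (e.symm b))
      (fun a b => ov (e.symm a) (e.symm b)) (fun a b => par (e.symm a) (e.symm b))
      (fun v => hirr (e.symm v))
      (fun u v w h1 h2 => htrans _ _ _ h1 h2)
      (fun a b v h1 h2 => by
        rcases hforest _ _ _ h1 h2 with h | h | h
        · exact Or.inl (e.symm.injective h)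
        · exact Or.inr (Or.inl h)
        · exact Or.inr (Or.inr h))
      (fun x y => hpart _ _)
      (fun x y => hdisj₁ _ _) (fun x y => hdisj₂ _ _) (fun x y => hdisj₃ _ _)
      (fun x y z => hA1 _ _ _) (fun x y z => hA2 _ _ _) (fun x y z => hA3 _ _ _)
      (fun x y z => hA4 _ _ _)
  refine ⟨T, tr, htree, fun x => S' (e x), fun x => hS1 (e x), ?_, ?_⟩
  · intro x y hxy
    have h := hS2 (e x) (e y) (by simp only [Equiv.symm_apply_apply]; exact hxy)
    simp only [Equiv.symm_apply_apply] at h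
    exact h
  · rintro ⟨x, y, z, h⟩
    exact hS3 ⟨e x, e y, e z, h⟩
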